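/- Let X ∈ ℝ^{n×d} be a matrix with columns X₁, …, X_d. For every β ∈ ℝᵈ and every integer s with 1 ≤ s ≤ d, there exists an s-sparse vector β′ ∈ ℝᵈ such that ‖Xβ − Xβ′‖₂ ≤ (2 max{‖X₁‖₂, …, ‖X_d‖₂} / √s) · ‖β‖₁. -/

import Mathlib

noncomputable def l2 {ι : Type*} [Fintype ι] (v : ι → ℝ) : ℝ :=
  Real.sqrt (∑ j, (v j)^2)

noncomputable def l1 {ι : Type*} [Fintype ι] (v : ι → ℝ) : ℝ := ∑ j, |v j|

def sparse {ι : Type*} (s : ℕ) (v : ι → ℝ) : Prop :=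
  ∃ T : Finset ι, T.card ≤ s ∧ ∀ j ∉ T, v j = 0

open Finset in
lemma exists_le_weighted {d : ℕ} (w : Fin d → ℝ) (hw : ∀ j, 0 ≤ w j)
    (hw1 : ∑ j, w j = 1) (a : Fin d → ℝ) : ∃ j, a j ≤ ∑ j, w j * a j := by
  by_contra h
  push_neg at h
  obtain ⟨j0, hj0⟩ : ∃ j, 0 < w j := by
    by_contra h2
    push_neg at h2
    have : ∑ j, w j = 0 := Finset.sum_eq_zero fun j _ => le_antisymm (h2 j) (hw j)
    rw [this] at hw1; norm_num at hw1
  have hlt : ∑ j, w j * (∑ j', w j' * a j') < ∑ j, w j * a j :=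
    Finset.sum_lt_sum (fun i _ => mul_le_mul_of_nonneg_left (h i).le (hw i))
      ⟨j0, Finset.mem_univ _, mul_lt_mul_of_pos_left (h j0) hj0⟩
  rw [← Finset.sum_mul, hw1, one_mul] at hlt
  exact lt_irrefl _ hlt

lemma maurey {E : Type*} [NormedAddCommGroup E] [InnerProductSpace ℝ E]
    {d : ℕ} (w : Fin d → ℝ) (hw : ∀ j, 0 ≤ w j) (hw1 : ∑ j, w j = 1)
    (u : Fin d → E) (x : E) (hx : ∑ j, w j • u j = x)
    (M : ℝ) (hM : ∀ j, ‖u j - x‖ ^ 2 ≤ M) :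
    ∀ k : ℕ, 1 ≤ k → ∃ f : Fin k → Fin d, ‖(k : ℝ)⁻¹ • ∑ i, u (f i) - x‖ ^ 2 ≤ M / k := by
  have hd : 0 < d := by
    by_contra h
    push_neg at h
    interval_cases d
    simp at hw1
  refine Nat.le_induction ?_ ?_
  · refine ⟨fun _ => ⟨0, hd⟩, ?_⟩
    simpa using hM ⟨0, hd⟩
  · rintro k hk ⟨f, hf⟩
    have hk0 : (k : ℝ) ≠ 0 := Nat.cast_ne_zero.mpr (by omega)
    have hk10 : (k : ℝ) + 1 ≠ 0 := by positivity
    set S : E := ∑ i, u (f i) with hS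
    set z : E := (k : ℝ)⁻¹ • S with hz
    set c : ℝ := (k : ℝ) / ((k : ℝ) + 1) with hc
    set e : ℝ := 1 / ((k : ℝ) + 1) with he
    have hzero : ∑ j, w j • (u j - x) = 0 := by
      simp only [smul_sub, Finset.sum_sub_distrib, hx, ← Finset.sum_smul, hw1, one_smul,
        sub_self]
    have hA : ∀ j, ‖c • (z - x) + e • (u j - x)‖ ^ 2
        = c ^ 2 * ‖z - x‖ ^ 2 + 2 * (c * e) * inner ℝ (z - x) (u j - x)
          + e ^ 2 * ‖u j - x‖ ^ 2 := by
      intro j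
      rw [norm_add_sq_real, real_inner_smul_left, real_inner_smul_right, norm_smul, norm_smul]
      simp only [Real.norm_eq_abs, mul_pow, sq_abs]
      ring
    have hsumA : ∑ j, w j * ‖c • (z - x) + e • (u j - x)‖ ^ 2 ≤ M / ((k : ℝ) + 1) := by
      have hmid : ∑ j, w j * (2 * (c * e) * inner ℝ (z - x) (u j - x)) = 0 := by
        have hterm : ∀ j, w j * (2 * (c * e) * inner ℝ (z - x) (u j - x))
            = 2 * (c * e) * inner ℝ (z - x) (w j • (u j - x)) := by
          intro j; rw [real_inner_smul_right]; ring
        simp_rw [hterm]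
        rw [← Finset.mul_sum, ← inner_sum, hzero, inner_zero_right, mul_zero]
      have h1 : ∑ j, w j * ‖c • (z - x) + e • (u j - x)‖ ^ 2
          = c ^ 2 * ‖z - x‖ ^ 2 + e ^ 2 * ∑ j, w j * ‖u j - x‖ ^ 2 := by
        simp only [hA, mul_add, Finset.sum_add_distrib]
        rw [hmid, add_zero]
        congr 1
        · rw [← Finset.sum_mul, hw1, one_mul]
        · rw [Finset.mul_sum]
          apply Finset.sum_congr rfl
          intro j _; ring
      rw [h1]
      have h2 : ∑ j, w j * ‖u j - x‖ ^ 2 ≤ M := by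
        calc ∑ j, w j * ‖u j - x‖ ^ 2 ≤ ∑ j, w j * M :=
              Finset.sum_le_sum fun j _ => mul_le_mul_of_nonneg_left (hM j) (hw j)
          _ = M := by rw [← Finset.sum_mul, hw1, one_mul]
      have h3 : c ^ 2 * ‖z - x‖ ^ 2 ≤ c ^ 2 * (M / k) :=
        mul_le_mul_of_nonneg_left hf (sq_nonneg c)
      have h4 : e ^ 2 * ∑ j, w j * ‖u j - x‖ ^ 2 ≤ e ^ 2 * M :=
        mul_le_mul_of_nonneg_left h2 (sq_nonneg e)
      have h5 : c ^ 2 * (M / k) + e ^ 2 * M = M / ((k : ℝ) + 1) := by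
        rw [hc, he]; field_simp
      linarith
    obtain ⟨j, hj⟩ := exists_le_weighted w hw hw1
      (fun j => ‖c • (z - x) + e • (u j - x)‖ ^ 2)
    set g : Fin (k + 1) → Fin d := Fin.snoc f j with hg
    refine ⟨g, ?_⟩
    have hgsum : ∑ i : Fin (k + 1), u (g i) = S + u j := by
      rw [Fin.sum_univ_castSucc]
      simp [hg, hS]
    have key : ((k + 1 : ℕ) : ℝ)⁻¹ • ∑ i : Fin (k + 1), u (g i) - x
        = c • (z - x) + e • (u j - x) := by
      rw [hgsum]
      push_cast
      simp only [hz, hc, he, smul_sub, smul_smul, smul_add]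
      match_scalars <;> field_simp <;> ring
    rw [key]
    calc ‖c • (z - x) + e • (u j - x)‖ ^ 2
        ≤ ∑ j', w j' * ‖c • (z - x) + e • (u j' - x)‖ ^ 2 := hj
      _ ≤ M / ((k : ℝ) + 1) := hsumA
      _ = M / ((k + 1 : ℕ) : ℝ) := by push_cast; ring

lemma l2_eq_norm {n : ℕ} (v : Fin n → ℝ) :
    l2 v = ‖(WithLp.equiv 2 (Fin n → ℝ)).symm v‖ := by
  rw [EuclideanSpace.norm_eq, l2]
  congr 1
  apply Finset.sum_congr rfl
  intro j _
  rw [show ((WithLp.equiv 2 (Fin n → ℝ)).symm v).ofLp j = v j from rfl, Real.norm_eq_abs, sq_abs]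

/-- Sparsification with ℓ₁-norm error. -/
theorem sparsification_l1 {n d : ℕ} (X : Matrix (Fin n) (Fin d) ℝ) (β : Fin d → ℝ)
    (s : ℕ) (hs1 : 1 ≤ s) (hsd : s ≤ d) :
    ∃ β' : Fin d → ℝ, sparse s β' ∧
      l2 (X.mulVec β - X.mulVec β') ≤
        2 * (⨆ j : Fin d, l2 (fun i => X i j)) / Real.sqrt s * l1 β := by
  classical
  have hd : 0 < d := lt_of_lt_of_le hs1 hsd
  set D : ℝ := ⨆ j : Fin d, l2 (fun i => X i j) with hD
  set L : (Fin n → ℝ) ≃ₗ[ℝ] EuclideanSpace ℝ (Fin n) :=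
    (WithLp.linearEquiv 2 ℝ (Fin n → ℝ)).symm with hL
  set col : Fin d → EuclideanSpace ℝ (Fin n) := fun j => L (fun i => X i j) with hcol
  have hl2L : ∀ v : Fin n → ℝ, l2 v = ‖L v‖ := fun v => l2_eq_norm v
  have hl2col : ∀ j, l2 (fun i => X i j) = ‖col j‖ := fun j => hl2L _
  have hcolD : ∀ j, ‖col j‖ ≤ D := by
    intro j
    rw [← hl2col, hD]
    exact le_ciSup (Set.Finite.bddAbove (Set.finite_range fun j : Fin d => l2 (fun i => X i j))) j
  have hD0 : 0 ≤ D := le_trans (by rw [← hl2col ⟨0, hd⟩, l2]; exact Real.sqrt_nonneg _)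
    (hcolD ⟨0, hd⟩)
  set B : ℝ := l1 β with hB
  have hB0 : 0 ≤ B := Finset.sum_nonneg fun j _ => abs_nonneg _
  rcases eq_or_lt_of_le hB0 with hBz | hBpos
  · have hb0 : ∀ j, β j = 0 := by
      intro j
      have := Finset.sum_eq_zero_iff_of_nonneg (fun j _ => abs_nonneg (β j)) |>.mp hBz.symm
      simpa using this j (Finset.mem_univ j)
    refine ⟨0, ⟨∅, by simp⟩, ?_⟩
    have hβ0 : β = 0 := funext hb0
    rw [hβ0, sub_self, ← hBz]
    simp [l2]
  · set x : EuclideanSpace ℝ (Fin n) := L (X.mulVec β) with hx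
    set sgn : Fin d → ℝ := fun j => if β j < 0 then -1 else 1 with hsgn
    have hsgnabs : ∀ j, |β j| * sgn j = β j := by
      intro j
      rw [hsgn]
      by_cases h : β j < 0
      · simp [h, abs_of_neg h]
      · simp [h, abs_of_nonneg (le_of_not_gt h)]
    set w : Fin d → ℝ := fun j => |β j| / B with hw'
    have hw : ∀ j, 0 ≤ w j := fun j => div_nonneg (abs_nonneg _) hB0
    have hw1 : ∑ j, w j = 1 := by
      rw [hw']
      rw [← Finset.sum_div]
      exact div_self (ne_of_gt hBpos)
    set u : Fin d → EuclideanSpace ℝ (Fin n) := fun j => (B * sgn j) • col j with hu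
    have hmvsum : ∀ γ : Fin d → ℝ, X.mulVec γ = ∑ j, γ j • (fun i => X i j) := by
      intro γ
      funext i
      simp only [Finset.sum_apply, Pi.smul_apply, smul_eq_mul]
      rw [Matrix.mulVec, dotProduct]
      exact Finset.sum_congr rfl fun j _ => mul_comm _ _
    have hxsum : x = ∑ j, β j • col j := by
      rw [hx, hmvsum, map_sum]
      exact Finset.sum_congr rfl fun j _ => map_smul _ _ _
    have hxu : ∑ j, w j • u j = x := by
      rw [hxsum]
      apply Finset.sum_congr rfl
      intro j _
      simp only [hu, hw', smul_smul]
      congr 1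
      field_simp
      linear_combination hsgnabs j
    have hxnorm : ‖x‖ ≤ B * D := by
      rw [hxsum]
      calc ‖∑ j, β j • col j‖ ≤ ∑ j, ‖β j • col j‖ := norm_sum_le _ _
        _ = ∑ j, |β j| * ‖col j‖ := by
            apply Finset.sum_congr rfl; intro j _; rw [norm_smul, Real.norm_eq_abs]
        _ ≤ ∑ j, |β j| * D :=
            Finset.sum_le_sum fun j _ => mul_le_mul_of_nonneg_left (hcolD j) (abs_nonneg _)
        _ = B * D := by rw [← Finset.sum_mul]; rfl
    have hunorm : ∀ j, ‖u j‖ ≤ B * D := by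
      intro j
      rw [hu, norm_smul, Real.norm_eq_abs, abs_mul, abs_of_nonneg hB0]
      have habs : |sgn j| = 1 := by rw [hsgn]; by_cases h : β j < 0 <;> simp [h]
      rw [habs, mul_one]
      exact mul_le_mul_of_nonneg_left (hcolD j) hB0
    have hM : ∀ j, ‖u j - x‖ ^ 2 ≤ (2 * B * D) ^ 2 := by
      intro j
      have h1 : ‖u j - x‖ ≤ 2 * B * D := by
        calc ‖u j - x‖ ≤ ‖u j‖ + ‖x‖ := norm_sub_le _ _
          _ ≤ B * D + B * D := add_le_add (hunorm j) hxnorm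
          _ = 2 * B * D := by ring
      exact pow_le_pow_left₀ (norm_nonneg _) h1 2
    obtain ⟨f, hf⟩ := maurey w hw hw1 u x hxu ((2 * B * D) ^ 2) hM s hs1
    set β' : Fin d → ℝ :=
      fun j => ((Finset.univ.filter (fun i : Fin s => f i = j)).card : ℝ)
        * ((s : ℝ)⁻¹ * (B * sgn j)) with hβ'
    have hzero' : ∀ j ∉ Finset.univ.image f, β' j = 0 := by
      intro j hj
      have hfil : (Finset.univ.filter (fun i : Fin s => f i = j)) = ∅ := by
        rw [Finset.filter_eq_empty_iff]
        intro i _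
        simp only [Finset.mem_image, Finset.mem_univ, true_and] at hj
        exact fun h => hj ⟨i, h⟩
      simp only [hβ', hfil]
      simp
    have hmv : L (X.mulVec β') = (s : ℝ)⁻¹ • ∑ i, u (f i) := by
      have h1 : L (X.mulVec β') = ∑ j, β' j • col j := by
        rw [hmvsum, map_sum]
        exact Finset.sum_congr rfl fun j _ => map_smul _ _ _
      rw [h1, Finset.sum_comp u f, Finset.smul_sum]
      rw [← Finset.sum_subset (Finset.subset_univ (Finset.univ.image f))
        (fun j _ hj => by rw [hzero' j hj, zero_smul])]
      apply Finset.sum_congr rfl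
      intro j _
      simp only [hβ', hu]
      rw [← Nat.cast_smul_eq_nsmul ℝ, smul_smul, smul_smul]
      congr 1
      ring
    refine ⟨β', ⟨Finset.univ.image f, le_trans Finset.card_image_le (by simp), hzero'⟩, ?_⟩
    have hnorm : l2 (X.mulVec β - X.mulVec β') = ‖x - (s : ℝ)⁻¹ • ∑ i, u (f i)‖ := by
      rw [hl2L, ← hmv, hx, ← map_sub]
    rw [hnorm, ← neg_sub, norm_neg]
    have hfle : ‖(s : ℝ)⁻¹ • ∑ i, u (f i) - x‖ ≤ 2 * B * D / Real.sqrt s := by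
      have h2 : ‖(s : ℝ)⁻¹ • ∑ i, u (f i) - x‖ ≤ Real.sqrt ((2 * B * D) ^ 2 / s) := by
        rw [← Real.sqrt_sq (norm_nonneg _)]
        exact Real.sqrt_le_sqrt hf
      calc ‖(s : ℝ)⁻¹ • ∑ i, u (f i) - x‖ ≤ Real.sqrt ((2 * B * D) ^ 2 / s) := h2
        _ = 2 * B * D / Real.sqrt s := by
            rw [Real.sqrt_div (sq_nonneg _), Real.sqrt_sq (by positivity)]
    calc ‖(s : ℝ)⁻¹ • ∑ i, u (f i) - x‖ ≤ 2 * B * D / Real.sqrt s := hfle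
      _ = 2 * D / Real.sqrt s * B := by ring
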